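/- Any Poincaré invariant linear partial differential operator of the second order on space-time ℝ×ℝⁿ (with continuous coefficients and not all second-order coefficients vanishing) is of the form L = α□ + β for some α ∈ ℂ\{0} and β ∈ ℂ. -/

import Mathlib

open scoped BigOperators

noncomputable section

/-- Partial derivative in the `i`-th coordinate direction. -/
def pd {d : ℕ} (i : Fin d) (u : (Fin d → ℝ) → ℂ) : (Fin d → ℝ) → ℂ :=
  fun x => fderiv ℝ u x (Pi.single i 1)

/-- Iterated mixed partial derivative `∂^β` for a multi-index `β`. -/
def pdMulti {d : ℕ} (β : Fin d → ℕ) (u : (Fin d → ℝ) → ℂ) : (Fin d → ℝ) → ℂ :=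
  (List.finRange d).foldr (fun i v => (pd i)^[β i] v) u

/-- The finite set of multi-indices (on `d` variables) of total degree at most `m`. -/
def mIdx (d m : ℕ) : Finset (Fin d → ℕ) :=
  (Fintype.piFinset fun _ : Fin d => Finset.range (m + 1)).filter fun β => (∑ i, β i) ≤ m

/-- The linear partial differential operator `L = ∑_{|β| ≤ m} a_β ∂^β`. -/
def opApply {d : ℕ} (m : ℕ) (a : (Fin d → ℕ) → (Fin d → ℝ) → ℂ)
    (u : (Fin d → ℝ) → ℂ) : (Fin d → ℝ) → ℂ :=
  fun x => ∑ β ∈ mIdx d m, a β x * pdMulti β u x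

/-- Smooth (`C^∞`) functions. -/
def SmoothFn {d : ℕ} (u : (Fin d → ℝ) → ℂ) : Prop := ContDiff ℝ (⊤ : ℕ∞) u

/-- The Minkowski metric matrix `g = diag(1, -1, …, -1)` on `ℝ × ℝⁿ`. -/
def minkMatrix (n : ℕ) : Matrix (Fin (n + 1)) (Fin (n + 1)) ℝ :=
  Matrix.diagonal fun i => if i = 0 then 1 else -1

/-- Membership in the Lorentz group `O(1,n)`:  `ᵗΛ g Λ = g`. -/
def IsLorentz {n : ℕ} (Λ : Matrix (Fin (n + 1)) (Fin (n + 1)) ℝ) : Prop :=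
  Λ.transpose * minkMatrix n * Λ = minkMatrix n

/-- The d'Alembertian `□ = ∂_t² - ∂₁² - ⋯ - ∂ₙ²` on space-time `ℝ × ℝⁿ`
(coordinate `0` is time). -/
def dAlem {n : ℕ} (u : (Fin (n + 1) → ℝ) → ℂ) : (Fin (n + 1) → ℝ) → ℂ :=
  fun x => pd 0 (pd 0 u) x - ∑ j : Fin n, pd j.succ (pd j.succ u) x

/-- `L` is translation invariant: `T_y^* L u = L T_y^* u`. -/
def TransInv {n : ℕ} (m : ℕ) (a : (Fin (n + 1) → ℕ) → (Fin (n + 1) → ℝ) → ℂ) : Prop :=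
  ∀ y : Fin (n + 1) → ℝ, ∀ u : (Fin (n + 1) → ℝ) → ℂ, SmoothFn u →
    ∀ x, opApply m a u (x - y) = opApply m a (fun z => u (z - y)) x

/-- `L` is Lorentz invariant: `Λ^* L u = L Λ^* u` for all `Λ ∈ O(1,n)`. -/
def LorentzInv {n : ℕ} (m : ℕ) (a : (Fin (n + 1) → ℕ) → (Fin (n + 1) → ℝ) → ℂ) : Prop :=
  ∀ Λ : Matrix (Fin (n + 1)) (Fin (n + 1)) ℝ, IsLorentz Λ →
    ∀ u : (Fin (n + 1) → ℝ) → ℂ, SmoothFn u →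
      ∀ x, opApply m a u (Λ.mulVec x) = opApply m a (fun z => u (Λ.mulVec z)) x


def e2 {d : ℕ} (i : Fin d) : Fin d → ℕ := fun j => if j = i then 2 else 0

lemma e2_inj {d : ℕ} : Function.Injective (e2 (d := d)) := by
  intro i j hEq
  by_contra hne
  have h := congrFun hEq i
  simp [e2, hne] at h

lemma sum_e2 {d : ℕ} (i : Fin d) : (∑ j, e2 i j) = 2 := by
  simp [e2]

lemma zero_mem_mIdx {d : ℕ} : (fun _ => 0 : Fin d → ℕ) ∈ mIdx d 2 := by
  simp [mIdx]

lemma e2_mem_mIdx {d : ℕ} (i : Fin d) : e2 i ∈ mIdx d 2 := by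
  simp only [mIdx, Finset.mem_filter, Fintype.mem_piFinset]
  constructor
  · intro j; simp [e2]; split <;> norm_num
  · rw [sum_e2]

lemma e2_ne_zero {d : ℕ} (i : Fin d) : e2 i ≠ (fun _ => 0) := by
  intro hEq
  have := congrFun hEq i
  simp [e2] at this

/-- special support set -/
def S2 (d : ℕ) : Finset (Fin d → ℕ) :=
  insert (fun _ => 0) (Finset.image e2 Finset.univ)

lemma S2_subset {d : ℕ} : S2 d ⊆ mIdx d 2 := by
  intro β hβ
  rcases Finset.mem_insert.1 hβ with h | h
  · rw [h]; exact zero_mem_mIdx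
  · rcases Finset.mem_image.1 h with ⟨i, _, rfl⟩; exact e2_mem_mIdx i

lemma mem_S2_of_even {d : ℕ} (β : Fin d → ℕ) (hβ : β ∈ mIdx d 2)
    (hev : ∀ k, Even (β k)) : β ∈ S2 d := by
  have hdeg : (∑ i, β i) ≤ 2 := (Finset.mem_filter.1 hβ).2
  by_cases h0 : ∀ k, β k = 0
  · exact Finset.mem_insert.2 (Or.inl (funext h0))
  · push_neg at h0
    obtain ⟨i, hi⟩ := h0
    have h2 : 2 ≤ β i := by
      rcases hev i with ⟨m, hm⟩
      omega
    have hle : β i ≤ 2 := le_trans (Finset.single_le_sum (fun j _ => Nat.zero_le _) (Finset.mem_univ i)) hdeg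
    have hbi : β i = 2 := le_antisymm hle h2
    have hrest : ∀ j, j ≠ i → β j = 0 := by
      intro j hj
      have hsub : ({i, j} : Finset (Fin d)) ⊆ Finset.univ := Finset.subset_univ _
      have := Finset.sum_le_sum_of_subset (f := β) hsub
      rw [Finset.sum_pair (Ne.symm hj)] at this
      omega
    refine Finset.mem_insert.2 (Or.inr (Finset.mem_image.2 ⟨i, Finset.mem_univ _, ?_⟩))
    funext j
    by_cases hj : j = i
    · subst hj; simp [e2, hbi]
    · simp [e2, hj, hrest j hj]

/-- Reduction of a sum over `mIdx d 2` to the special support. -/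
lemma sum_mIdx_reduce {d : ℕ} (g : (Fin d → ℕ) → ℂ)
    (hg : ∀ β ∈ mIdx d 2, (∃ k, Odd (β k)) → g β = 0) :
    ∑ β ∈ mIdx d 2, g β = g (fun _ => 0) + ∑ i, g (e2 i) := by
  rw [← Finset.sum_subset S2_subset]
  · rw [S2, Finset.sum_insert, Finset.sum_image]
    · intro i _ j _ h; exact e2_inj h
    · rw [Finset.mem_image]
      rintro ⟨i, _, hEq⟩
      exact e2_ne_zero i hEq
  · intro β hβ hβS
    apply hg β hβ
    by_contra hodd
    push_neg at hodd
    refine hβS (mem_S2_of_even β hβ fun k => ?_)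
    exact Nat.not_odd_iff_even.1 (hodd k)

-- linear functional
def lw {d : ℕ} (w : Fin d → ℂ) : (Fin d → ℝ) →L[ℝ] ℂ :=
  ∑ i, w i • (Complex.ofRealCLM.comp (ContinuousLinearMap.proj i))

lemma lw_apply {d : ℕ} (w : Fin d → ℂ) (x : Fin d → ℝ) :
    lw w x = ∑ i, w i * (x i : ℂ) := by
  simp [lw, ContinuousLinearMap.sum_apply, mul_comm]

def expw {d : ℕ} (w : Fin d → ℂ) : (Fin d → ℝ) → ℂ := fun x => Complex.exp (lw w x)

lemma expw_ne_zero {d : ℕ} (w : Fin d → ℂ) (x : Fin d → ℝ) : expw w x ≠ 0 :=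
  Complex.exp_ne_zero _

lemma lw_single {d : ℕ} (w : Fin d → ℂ) (i : Fin d) :
    lw w (Pi.single i 1) = w i := by
  rw [lw_apply]
  rw [Finset.sum_eq_single i]
  · simp
  · intro j _ hj; simp [Pi.single_eq_of_ne hj]
  · simp

lemma pd_expw_mul {d : ℕ} (w : Fin d → ℂ) (c : ℂ) (i : Fin d) :
    pd i (fun x => c * expw w x) = fun x => (w i * c) * expw w x := by
  funext x
  have h1 : HasFDerivAt (fun x => Complex.exp (lw w x)) (Complex.exp (lw w x) • lw w) x :=
    ((lw w).hasFDerivAt).cexp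
  have h : HasFDerivAt (fun x => c * expw w x) ((c * expw w x) • lw w) x := by
    have h2 := h1.const_mul c
    simpa [expw, smul_smul, mul_comm] using h2
  rw [pd, h.fderiv]
  simp [lw_single, expw]
  ring

lemma pd_iter_expw {d : ℕ} (w : Fin d → ℂ) (i : Fin d) (k : ℕ) (c : ℂ) :
    (pd i)^[k] (fun x => c * expw w x) = fun x => (w i ^ k * c) * expw w x := by
  induction k with
  | zero => simp
  | succ k ih =>
      rw [Function.iterate_succ_apply', ih, pd_expw_mul]
      funext x; ring

lemma foldr_expw {d : ℕ} (w : Fin d → ℂ) (β : Fin d → ℕ) (L : List (Fin d)) (c : ℂ) :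
    L.foldr (fun i v => (pd i)^[β i] v) (fun x => c * expw w x)
      = fun x => ((L.map fun i => w i ^ β i).prod * c) * expw w x := by
  induction L with
  | nil => simp
  | cons hd tl ih =>
      rw [List.foldr_cons, ih, pd_iter_expw]
      funext x; rw [List.map_cons, List.prod_cons]; ring

lemma pdMulti_expw {d : ℕ} (w : Fin d → ℂ) (β : Fin d → ℕ) (c : ℂ) :
    pdMulti β (fun x => c * expw w x) = fun x => ((∏ i, w i ^ β i) * c) * expw w x := by
  rw [pdMulti, foldr_expw, Fin.prod_univ_def]

lemma smooth_expw_mul {d : ℕ} (w : Fin d → ℂ) (c : ℂ) :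
    SmoothFn (fun x => c * expw w x) := by
  apply ContDiff.mul contDiff_const
  exact (Complex.contDiff_exp (𝕜 := ℝ)).comp (lw w).contDiff

lemma opApply_expw {d : ℕ} (a : (Fin d → ℕ) → (Fin d → ℝ) → ℂ) (w : Fin d → ℂ)
    (c : ℂ) (x : Fin d → ℝ) :
    opApply 2 a (fun z => c * expw w z) x
      = (∑ β ∈ mIdx d 2, a β x * ∏ i, w i ^ β i) * (c * expw w x) := by
  rw [opApply, Finset.sum_mul]
  refine Finset.sum_congr rfl fun β _ => ?_
  rw [pdMulti_expw]
  ring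

lemma coeffs_vanish {d : ℕ} (S : Finset (Fin d → ℕ)) (c : (Fin d → ℕ) → ℂ)
    (h : ∀ w : Fin d → ℂ, ∑ β ∈ S, c β * ∏ i, w i ^ β i = 0) :
    ∀ β ∈ S, c β = 0 := by
  classical
  set toF : (Fin d → ℕ) → (Fin d →₀ ℕ) := fun β => Finsupp.equivFunOnFinite.symm β with htoF
  have hinj : Function.Injective toF := Finsupp.equivFunOnFinite.symm.injective
  set p : MvPolynomial (Fin d) ℂ := ∑ β ∈ S, MvPolynomial.monomial (toF β) (c β) with hp
  have heval : ∀ w : Fin d → ℂ, MvPolynomial.eval w p = 0 := by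
    intro w
    rw [hp, map_sum]
    rw [← h w]
    refine Finset.sum_congr rfl fun β _ => ?_
    rw [MvPolynomial.eval_monomial]
    congr 1
    rw [Finsupp.prod_fintype]
    · rfl
    · intro i; rfl
  have hp0 : p = 0 := by
    apply MvPolynomial.funext
    intro x; rw [heval x]; simp
  intro β hβ
  have : MvPolynomial.coeff (toF β) p = c β := by
    rw [hp, MvPolynomial.coeff_sum]
    rw [Finset.sum_eq_single β]
    · rw [MvPolynomial.coeff_monomial, if_pos rfl]
    · intro b hb hne
      rw [MvPolynomial.coeff_monomial, if_neg (fun hEq => hne (hinj hEq))]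
    · intro hβ'; exact absurd hβ hβ'
  rw [hp0] at this
  simpa using this.symm

/-- reflection in coordinate k -/
def refl' (n : ℕ) (k : Fin (n + 1)) : Matrix (Fin (n + 1)) (Fin (n + 1)) ℝ :=
  Matrix.diagonal fun i => if i = k then -1 else 1

lemma refl_lorentz (n : ℕ) (k : Fin (n + 1)) : IsLorentz (refl' n k) := by
  rw [IsLorentz, refl', minkMatrix, Matrix.diagonal_transpose,
    Matrix.diagonal_mul_diagonal, Matrix.diagonal_mul_diagonal]
  refine congrArg Matrix.diagonal (funext fun i => ?_)
  have key : ∀ e g : ℝ, (e = 1 ∨ e = -1) → e * g * e = g := by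
    rintro e g (rfl | rfl) <;> ring
  apply key
  by_cases h : i = k <;> simp [h]

/-- boost mixing coordinates 0 and k -/
def ggv (n : ℕ) : Fin (n + 1) → ℝ := fun i => if i = 0 then 1 else -1

def boost (n : ℕ) (k : Fin (n + 1)) : Matrix (Fin (n + 1)) (Fin (n + 1)) ℝ :=
  fun i j =>
    if i = 0 ∧ j = 0 then 5/4
    else if i = k ∧ j = k then 5/4
    else if (i = 0 ∧ j = k) ∨ (i = k ∧ j = 0) then 3/4
    else if i = j then 1 else 0

lemma boost_apply_zero (n : ℕ) (k : Fin (n + 1)) (hk : k ≠ 0) (i : Fin (n + 1)) :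
    boost n k 0 i = if i = 0 then 5/4 else if i = k then 3/4 else 0 := by
  have h0k : (0 : Fin (n+1)) ≠ k := Ne.symm hk
  by_cases h0 : i = 0
  · subst h0; simp [boost]
  · by_cases hik : i = k
    · subst hik; simp [boost, h0, h0k]
    · simp [boost, h0, hik, h0k, Ne.symm h0]

lemma boost_apply_k (n : ℕ) (k : Fin (n + 1)) (hk : k ≠ 0) (i : Fin (n + 1)) :
    boost n k k i = if i = 0 then 3/4 else if i = k then 5/4 else 0 := by
  have h0k : (0 : Fin (n+1)) ≠ k := Ne.symm hk
  by_cases h0 : i = 0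
  · subst h0; simp [boost, hk, h0k]
  · by_cases hik : i = k
    · subst hik; simp [boost, hk, h0]
    · have hki : ¬ k = i := fun h => hik h.symm
      simp [boost, hk, h0, hik, hki]

lemma boost_apply_other (n : ℕ) (k : Fin (n + 1)) (l : Fin (n + 1))
    (hl0 : l ≠ 0) (hlk : l ≠ k) (i : Fin (n + 1)) :
    boost n k l i = if l = i then 1 else 0 := by
  simp [boost, hl0, hlk]

lemma boost_lorentz (n : ℕ) (k : Fin (n + 1)) (hk : k ≠ 0) : IsLorentz (boost n k) := by
  rw [IsLorentz, mul_assoc]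
  ext i j
  rw [Matrix.mul_apply]
  have hMB : ∀ l m, (minkMatrix n * boost n k) l m = ggv n l * boost n k l m := by
    intro l m; rw [minkMatrix, Matrix.diagonal_mul]; rfl
  simp only [Matrix.transpose_apply, hMB]
  have hsplit : ∑ l, boost n k l i * (ggv n l * boost n k l j)
      = (∑ l ∈ ({0, k} : Finset (Fin (n+1))), boost n k l i * (ggv n l * boost n k l j))
        + ∑ l ∈ ({0, k} : Finset (Fin (n+1)))ᶜ, boost n k l i * (ggv n l * boost n k l j) := by
    rw [Finset.sum_add_sum_compl]
  rw [hsplit, Finset.sum_pair (Ne.symm hk)]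
  have hcompl : ∑ l ∈ ({0, k} : Finset (Fin (n+1)))ᶜ, boost n k l i * (ggv n l * boost n k l j)
      = if i = j ∧ i ≠ 0 ∧ i ≠ k then ggv n i else 0 := by
    rw [Finset.sum_congr rfl (g := fun l => (if l = i then 1 else 0) * (ggv n l * if l = j then 1 else 0))]
    · by_cases hij : i = j
      · subst hij
        by_cases hi : i ∈ ({0, k} : Finset (Fin (n+1)))ᶜ
        · rw [Finset.sum_eq_single_of_mem i hi]
          · simp only [if_pos rfl, Finset.mem_compl, Finset.mem_insert, Finset.mem_singleton, not_or] at hi ⊢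
            simp [hi.1, hi.2]
          · intro b _ hb; simp [hb]
        · simp only [Finset.mem_compl, Finset.mem_insert, Finset.mem_singleton, not_or, not_and, not_not] at hi
          rw [Finset.sum_eq_zero, if_neg]
          · intro h
            rcases (or_iff_not_imp_left.2 hi) with h' | h'
            all_goals first
              | exact h.2.1 (by tauto)
              | exact h.2.2 (by tauto)
          · intro l hl
            simp only [Finset.mem_compl, Finset.mem_insert, Finset.mem_singleton, not_or] at hl
            by_cases hli : l = i
            · subst hli
              exfalso
              by_cases l0 : l = 0
              · exact hl.1 l0
              · exact hl.2 (hi l0)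
            · simp [hli]
      · rw [Finset.sum_eq_zero, if_neg (by tauto)]
        intro l _
        by_cases hli : l = i
        · subst hli; simp [fun h : l = j => hij h]
        · simp [hli]
    · intro l hl
      simp only [Finset.mem_compl, Finset.mem_insert, Finset.mem_singleton, not_or] at hl
      rw [boost_apply_other n k l hl.1 hl.2 i, boost_apply_other n k l hl.1 hl.2 j]
  rw [hcompl, boost_apply_zero n k hk i, boost_apply_zero n k hk j,
    boost_apply_k n k hk i, boost_apply_k n k hk j]
  have hgg0 : ggv n 0 = 1 := by simp [ggv]
  have hggk : ggv n k = -1 := by simp [ggv, hk]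
  rw [hgg0, hggk, minkMatrix, Matrix.diagonal_apply]
  have h0k : ¬ (0 : Fin (n+1)) = k := fun h => hk h.symm
  rcases eq_or_ne i 0 with rfl | hi0
  · rcases eq_or_ne j 0 with rfl | hj0
    · simp [h0k]; norm_num
    · rcases eq_or_ne j k with rfl | hjk
      · simp [h0k, hk]; norm_num
      · simp [h0k, hj0, hjk, Ne.symm hj0]
  · rcases eq_or_ne i k with rfl | hik
    · rcases eq_or_ne j 0 with rfl | hj0
      · simp [hi0, h0k]; norm_num
      · rcases eq_or_ne j i with rfl | hji
        · simp [hi0, hk]; norm_num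
        · simp [hi0, hj0, hji, Ne.symm hji]
    · rcases eq_or_ne j 0 with rfl | hj0
      · simp [hi0, hik, Ne.symm hi0]
      · rcases eq_or_ne j k with rfl | hjk
        · simp [hi0, hik, Ne.symm hik, hj0]
        · rcases eq_or_ne i j with rfl | hij
          · simp [hi0, hik, ggv]
          · simp [hi0, hik, hj0, hjk, hij]

lemma foldr_pd_zero {d : ℕ} (u : (Fin d → ℝ) → ℂ) (β : Fin d → ℕ) (L : List (Fin d))
    (h : ∀ i ∈ L, β i = 0) :
    L.foldr (fun i v => (pd i)^[β i] v) u = u := by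
  induction L with
  | nil => rfl
  | cons a tl ih =>
      rw [List.foldr_cons, ih (fun i hi => h i (List.mem_cons_of_mem a hi)),
        h a List.mem_cons_self, Function.iterate_zero_apply]

lemma pdMulti_zero {d : ℕ} (u : (Fin d → ℝ) → ℂ) :
    pdMulti (fun _ => 0) u = u :=
  foldr_pd_zero u _ _ (fun _ _ => rfl)

lemma foldr_pd_single {d : ℕ} (u : (Fin d → ℝ) → ℂ) (i0 : Fin d) (β : Fin d → ℕ)
    (hβ : ∀ j, j ≠ i0 → β j = 0) :
    ∀ L : List (Fin d), L.Nodup → i0 ∈ L →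
      L.foldr (fun i v => (pd i)^[β i] v) u = (pd i0)^[β i0] u := by
  intro L
  induction L with
  | nil => intro _ h; simp at h
  | cons a tl ih =>
      intro hnd hmem
      rw [List.foldr_cons]
      by_cases ha : a = i0
      · subst ha
        rw [foldr_pd_zero u β tl]
        intro i hi
        exact hβ i (fun hEq => ((List.nodup_cons.mp hnd).1 (hEq ▸ hi)))
      · have hmem' : i0 ∈ tl := by
          rcases List.mem_cons.mp hmem with h | h
          · exact absurd h.symm ha
          · exact h
        rw [ih (List.nodup_cons.mp hnd).2 hmem', hβ a ha, Function.iterate_zero_apply]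

lemma pdMulti_e2 {d : ℕ} (u : (Fin d → ℝ) → ℂ) (i0 : Fin d) :
    pdMulti (e2 i0) u = pd i0 (pd i0 u) := by
  rw [pdMulti, foldr_pd_single u i0 (e2 i0) (fun j hj => by simp [e2, hj])
    (List.finRange d) (List.nodup_finRange d) (List.mem_finRange i0)]
  have h2 : e2 i0 i0 = 2 := by simp [e2]
  rw [h2]
  rfl

def PS {d : ℕ} (A : (Fin d → ℕ) → ℂ) (w : Fin d → ℂ) : ℂ :=
  ∑ β ∈ mIdx d 2, A β * ∏ i, w i ^ β i

lemma PS_reduce {d : ℕ} (A : (Fin d → ℕ) → ℂ)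
    (hodd : ∀ β ∈ mIdx d 2, (∃ k, Odd (β k)) → A β = 0) (w : Fin d → ℂ) :
    PS A w = A (fun _ => 0) + ∑ i, A (e2 i) * w i ^ 2 := by
  rw [PS, sum_mIdx_reduce (fun β => A β * ∏ i, w i ^ β i)
    (fun β hβ h => by show A β * _ = 0; rw [hodd β hβ h, zero_mul])]
  congr 1
  · simp
  · refine Finset.sum_congr rfl fun i _ => ?_
    congr 1
    rw [Finset.prod_eq_single i]
    · simp [e2]
    · intro j _ hj; simp [e2, hj]
    · simp

/-- Corollary 1: Any Poincaré invariant linear partial differential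
operator of the second order on space-time `ℝ × ℝⁿ` is of the form `L = α □ + β` with
`α ≠ 0`. -/
theorem second_order_poincare_invariant (n : ℕ)
    (a : (Fin (n + 1) → ℕ) → (Fin (n + 1) → ℝ) → ℂ)
    (hcont : ∀ β ∈ mIdx (n + 1) 2, Continuous (a β))
    (htop : ∃ β ∈ mIdx (n + 1) 2, (∑ i, β i) = 2 ∧ ∃ x, a β x ≠ 0)
    (hT : TransInv 2 a) (hL : LorentzInv 2 a) :
    ∃ α c : ℂ, α ≠ 0 ∧
      ∀ u : (Fin (n + 1) → ℝ) → ℂ, SmoothFn u → ∀ x,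
        opApply 2 a u x = α * dAlem u x + c * u x := by
  classical
  -- Step 1: translation invariance forces constant coefficients
  have hshift : ∀ (y x : Fin (n+1) → ℝ) (w : Fin (n+1) → ℂ),
      (∑ β ∈ mIdx (n+1) 2, a β (x - y) * ∏ i, w i ^ β i)
        = ∑ β ∈ mIdx (n+1) 2, a β x * ∏ i, w i ^ β i := by
    intro y x w
    have h := hT y (fun z => (1:ℂ) * expw w z) (smooth_expw_mul w 1) x
    have hfun : (fun z => (1:ℂ) * expw w (z - y))
        = fun z => Complex.exp (-(lw w y)) * expw w z := by
      funext z
      rw [one_mul, expw, expw, map_sub, sub_eq_add_neg, Complex.exp_add, mul_comm]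
    rw [hfun, opApply_expw, opApply_expw] at h
    have hx : (1:ℂ) * expw w (x - y) = Complex.exp (-(lw w y)) * expw w x := by
      rw [one_mul, expw, expw, map_sub, sub_eq_add_neg, Complex.exp_add, mul_comm]
    rw [hx] at h
    exact mul_right_cancel₀ (mul_ne_zero (Complex.exp_ne_zero _) (expw_ne_zero w x)) h
  have hconst : ∀ β ∈ mIdx (n+1) 2, ∀ z, a β z = a β 0 := by
    intro β hβ z
    have hv := coeffs_vanish (mIdx (n+1) 2) (fun β' => a β' z - a β' 0) ?_ β hβ
    · exact sub_eq_zero.mp hv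
    · intro w
      have h2 := hshift (-z) 0 w
      simp only [zero_sub, neg_neg] at h2
      simp only [sub_mul]
      rw [Finset.sum_sub_distrib, h2, sub_self]
  set A : (Fin (n+1) → ℕ) → ℂ := fun β => a β 0 with hA
  -- Step 2: Lorentz invariance of the symbol
  have hkey : ∀ Λ : Matrix (Fin (n+1)) (Fin (n+1)) ℝ, IsLorentz Λ → ∀ w : Fin (n+1) → ℂ,
      PS A w = PS A (fun j => ∑ i, w i * ((Λ i j : ℝ) : ℂ)) := by
    intro Λ hΛ w
    have h := hL Λ hΛ (fun z => (1:ℂ) * expw w z) (smooth_expw_mul w 1) 0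
    have hfun : (fun z => (1:ℂ) * expw w (Λ.mulVec z))
        = fun z => (1:ℂ) * expw (fun j => ∑ i, w i * ((Λ i j : ℝ) : ℂ)) z := by
      funext z
      rw [one_mul, one_mul, expw, expw]
      congr 1
      rw [lw_apply, lw_apply]
      have hmv : ∀ i, (((Λ.mulVec z) i : ℝ) : ℂ) = ∑ j, ((Λ i j : ℝ):ℂ) * ((z j : ℝ):ℂ) := by
        intro i
        rw [Matrix.mulVec, dotProduct]
        push_cast
        rfl
      calc ∑ i, w i * (((Λ.mulVec z) i : ℝ) : ℂ)
          = ∑ i, ∑ j, w i * (((Λ i j : ℝ):ℂ) * ((z j : ℝ):ℂ)) := by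
            refine Finset.sum_congr rfl fun i _ => ?_
            rw [hmv i, Finset.mul_sum]
        _ = ∑ j, ∑ i, w i * (((Λ i j : ℝ):ℂ) * ((z j : ℝ):ℂ)) := Finset.sum_comm
        _ = ∑ j, (∑ i, w i * ((Λ i j : ℝ):ℂ)) * ((z j : ℝ):ℂ) := by
            refine Finset.sum_congr rfl fun j _ => ?_
            rw [Finset.sum_mul]
            refine Finset.sum_congr rfl fun i _ => ?_
            ring
    rw [hfun, opApply_expw, opApply_expw, Matrix.mulVec_zero] at h
    have e0 : ∀ w'' : Fin (n+1) → ℂ, expw w'' 0 = 1 := fun w'' => by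
      rw [expw, map_zero, Complex.exp_zero]
    rw [e0, e0] at h
    have hPs : ∀ w'' : Fin (n+1) → ℂ,
        (∑ β ∈ mIdx (n+1) 2, a β 0 * ∏ i, w'' i ^ β i) = PS A w'' := by
      intro w''; rfl
    rw [hPs, hPs] at h
    simpa using h
  -- Step 3: reflections kill coefficients with an odd entry
  have hodd : ∀ β ∈ mIdx (n+1) 2, (∃ k, Odd (β k)) → A β = 0 := by
    rintro β hβ ⟨k, hk⟩
    have hv := coeffs_vanish (mIdx (n+1) 2)
      (fun β' => A β' - A β' * (-1:ℂ)^(β' k)) ?_ β hβ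
    · have hv' : A β - A β * (-1:ℂ)^(β k) = 0 := hv
      have hneg : ((-1:ℂ))^(β k) = -1 := Odd.neg_one_pow hk
      rw [hneg] at hv'
      have hv := hv'
      have h2 : (2:ℂ) * A β = 0 := by linear_combination hv
      exact (mul_eq_zero.mp h2).resolve_left two_ne_zero
    · intro w
      have h := hkey (refl' n k) (refl_lorentz n k) w
      have hwr : (fun j => ∑ i, w i * ((refl' n k i j : ℝ):ℂ))
          = fun j => (if j = k then (-1:ℂ) else 1) * w j := by
        funext j
        rw [Finset.sum_eq_single j]
        · rw [refl', Matrix.diagonal_apply_eq]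
          rw [mul_comm]
          congr 1
          split <;> simp
        · intro b _ hb
          rw [refl', Matrix.diagonal_apply_ne _ hb]
          simp
        · simp
      rw [hwr] at h
      have hexp : PS A (fun j => (if j = k then (-1:ℂ) else 1) * w j)
          = ∑ β' ∈ mIdx (n+1) 2, (A β' * (-1:ℂ)^(β' k)) * ∏ i, w i ^ β' i := by
        rw [PS]
        refine Finset.sum_congr rfl fun β' _ => ?_
        have hprod : (∏ i, ((if i = k then (-1:ℂ) else 1) * w i) ^ β' i)
            = (-1:ℂ)^(β' k) * ∏ i, w i ^ β' i := by
          rw [Finset.prod_congr rfl (fun i _ => mul_pow _ _ _), Finset.prod_mul_distrib]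
          congr 1
          rw [Finset.prod_eq_single k]
          · rw [if_pos rfl]
          · intro b _ hb; rw [if_neg hb, one_pow]
          · simp
        rw [hprod]
        ring
      simp only [sub_mul]
      rw [Finset.sum_sub_distrib, ← hexp]
      have hPsw : (∑ β' ∈ mIdx (n+1) 2, A β' * ∏ i, w i ^ β' i) = PS A w := rfl
      rw [hPsw, ← h, sub_self]
  have hred := PS_reduce A hodd
  -- Step 4: boosts relate spatial to time coefficient
  have hAk : ∀ k : Fin (n+1), k ≠ 0 → A (e2 k) = - A (e2 0) := by
    intro k hk
    have h := hkey (boost n k) (boost_lorentz n k hk) (Pi.single 0 1)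
    rw [hred, hred] at h
    have hL1 : (∑ i, A (e2 i) * (Pi.single (M := fun _ => ℂ) (0:Fin (n+1)) 1 i) ^ 2) = A (e2 0) := by
      rw [Finset.sum_eq_single 0]
      · simp
      · intro b _ hb; rw [Pi.single_eq_of_ne hb]; simp
      · simp
    have hw' : ∀ j, (∑ i, Pi.single (M := fun _ => ℂ) (0:Fin (n+1)) 1 i * ((boost n k i j : ℝ):ℂ))
        = ((boost n k 0 j : ℝ) : ℂ) := by
      intro j
      rw [Finset.sum_eq_single 0]
      · simp
      · intro b _ hb; rw [Pi.single_eq_of_ne hb, zero_mul]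
      · simp
    have hR : (∑ j, A (e2 j) * (∑ i, Pi.single (M := fun _ => ℂ) (0:Fin (n+1)) 1 i * ((boost n k i j : ℝ):ℂ)) ^ 2)
        = A (e2 0) * (5/4:ℂ)^2 + A (e2 k) * (3/4:ℂ)^2 := by
      rw [Finset.sum_congr rfl (fun j _ => by rw [hw' j])]
      rw [← Finset.sum_subset (Finset.subset_univ ({0, k} : Finset (Fin (n+1))))]
      · rw [Finset.sum_pair (fun h0 => hk h0.symm)]
        rw [boost_apply_zero n k hk 0, boost_apply_zero n k hk k]
        rw [if_pos rfl, if_neg hk, if_pos rfl]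
        norm_num
      · intro x _ hx
        simp only [Finset.mem_insert, Finset.mem_singleton, not_or] at hx
        rw [boost_apply_zero n k hk x, if_neg hx.1, if_neg hx.2]
        simp
    rw [hL1, hR] at h
    linear_combination (-16/9 : ℂ) * h
  -- Step 5: the leading coefficient is nonzero
  obtain ⟨β₀, hβ₀, hdeg, x₀, hx₀⟩ := htop
  have hAβ₀ : A β₀ ≠ 0 := fun hEq => hx₀ (by rw [hconst β₀ hβ₀ x₀]; exact hEq)
  have hev : ∀ k, Even (β₀ k) := by
    intro k
    by_contra hodd'
    exact hAβ₀ (hodd β₀ hβ₀ ⟨k, Nat.not_even_iff_odd.mp hodd'⟩)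
  have hmem := mem_S2_of_even β₀ hβ₀ hev
  have hαne : A (e2 0) ≠ 0 := by
    rcases Finset.mem_insert.mp hmem with h0 | him
    · rw [h0] at hdeg; simp at hdeg
    · obtain ⟨i0, _, hBeq⟩ := Finset.mem_image.mp him
      by_cases hi : i0 = 0
      · subst hi; rw [← hBeq] at hAβ₀; exact hAβ₀
      · intro hz
        rw [← hBeq, hAk i0 hi, hz, neg_zero] at hAβ₀
        exact hAβ₀ rfl
  refine ⟨A (e2 0), A (fun _ => 0), hαne, ?_⟩
  intro u _ x
  rw [opApply]
  have h1 : (∑ β ∈ mIdx (n+1) 2, a β x * pdMulti β u x)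
      = ∑ β ∈ mIdx (n+1) 2, A β * pdMulti β u x :=
    Finset.sum_congr rfl (fun β hβ => by rw [hconst β hβ x])
  rw [h1, sum_mIdx_reduce (fun β => A β * pdMulti β u x)
    (fun β hβ h => by show A β * _ = 0; rw [hodd β hβ h, zero_mul])]
  have h2 : (∑ i, A (e2 i) * pdMulti (e2 i) u x)
      = A (e2 0) * pd 0 (pd 0 u) x
        + ∑ j : Fin n, - A (e2 0) * pd j.succ (pd j.succ u) x := by
    have h3 : (∑ i, A (e2 i) * pdMulti (e2 i) u x)
        = ∑ i, A (e2 i) * pd i (pd i u) x :=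
      Finset.sum_congr rfl (fun i _ => by rw [pdMulti_e2])
    rw [h3, Fin.sum_univ_succ]
    congr 1
    refine Finset.sum_congr rfl fun j _ => ?_
    rw [hAk j.succ (Fin.succ_ne_zero j)]
  rw [h2, pdMulti_zero, dAlem]
  have h4 : (∑ j : Fin n, - A (e2 0) * pd j.succ (pd j.succ u) x)
      = - (A (e2 0) * ∑ j : Fin n, pd j.succ (pd j.succ u) x) := by
    rw [Finset.mul_sum, ← Finset.sum_neg_distrib]
    exact Finset.sum_congr rfl fun j _ => by ring
  rw [h4]
  ring
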